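/- Under Assumptions 1 and 3, the system ẋ = f(x, λ(x)) admits a nonzero disease-free equilibrium point: there exists x* ∈ X_eq with x* ≠ 0. -/

import Mathlib

open Matrix

noncomputable section

/-- The state space `ℝ^n` with `n = n_I + n_U`, infected coordinates indexed by
`Fin nI` (via `Sum.inl`) and uninfected ones by `Fin nU` (via `Sum.inr`). -/
abbrev EpiState (nI nU : ℕ) := (Fin nI ⊕ Fin nU) → ℝ

/-- Infected part of a state. -/
def xInf {nI nU : ℕ} (x : EpiState nI nU) : Fin nI → ℝ := fun i => x (Sum.inl i)

/-- Uninfected part of a state. -/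
def xUnf {nI nU : ℕ} (x : EpiState nI nU) : Fin nU → ℝ := fun j => x (Sum.inr j)

/-- The vector field `f(x, μ) = ((F₀(μ)+Vᴵ)xᴵ + F₊(μ)xᵁ, Vᵁ x − F₋(μ)xᵁ)`. -/
def epiF {nI nU nL : ℕ} (VI : Matrix (Fin nI) (Fin nI) ℝ)
    (VU : Matrix (Fin nU) (Fin nI ⊕ Fin nU) ℝ)
    (F0 : (Fin nL → ℝ) → Matrix (Fin nI) (Fin nI) ℝ)
    (Fp : (Fin nL → ℝ) → Matrix (Fin nI) (Fin nU) ℝ)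
    (Fm : (Fin nL → ℝ) → Matrix (Fin nU) (Fin nU) ℝ)
    (x : EpiState nI nU) (μ : Fin nL → ℝ) : EpiState nI nU :=
  Sum.elim ((F0 μ + VI).mulVec (xInf x) + (Fp μ).mulVec (xUnf x))
    (VU.mulVec x - (Fm μ).mulVec (xUnf x))

/-- The set of disease-free states `X_s`. -/
def XsSet (nI nU : ℕ) : Set (EpiState nI nU) :=
  {x | (∀ i, x (Sum.inl i) = 0) ∧ ∀ j, 0 ≤ x (Sum.inr j)}

/-- The set of disease-free equilibria `X_eq`. -/
def XeqSet {nI nU nL : ℕ} (VI : Matrix (Fin nI) (Fin nI) ℝ)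
    (VU : Matrix (Fin nU) (Fin nI ⊕ Fin nU) ℝ)
    (F0 : (Fin nL → ℝ) → Matrix (Fin nI) (Fin nI) ℝ)
    (Fp : (Fin nL → ℝ) → Matrix (Fin nI) (Fin nU) ℝ)
    (Fm : (Fin nL → ℝ) → Matrix (Fin nU) (Fin nU) ℝ) : Set (EpiState nI nU) :=
  {x ∈ XsSet nI nU | epiF VI VU F0 Fp Fm x 0 = 0}

/-- A real matrix is Metzler if its off-diagonal entries are nonnegative. -/
def Metzler {ι : Type*} (M : Matrix ι ι ℝ) : Prop := ∀ i j, i ≠ j → 0 ≤ M i j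

/-!
Statement 1: Under Assumptions 1 and 3, the system `ẋ = f(x, λ(x))` admits a
nonzero disease-free equilibrium point.
-/

open Filter Topology in
theorem exists_stationary {m : ℕ} (hm : 0 < m) (A : Matrix (Fin m) (Fin m) ℝ)
    (hMetz : ∀ i j, i ≠ j → 0 ≤ A i j) (hsum : ∀ j, ∑ i, A i j = 0) :
    ∃ v : Fin m → ℝ, (∀ i, 0 ≤ v i) ∧ (∑ i, v i = 1) ∧ A.mulVec v = 0 := by
  set ε : ℝ := (1 + ∑ i, |A i i|)⁻¹ with hεdef
  have hden : (0:ℝ) < 1 + ∑ i, |A i i| := by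
    have : (0:ℝ) ≤ ∑ i, |A i i| := Finset.sum_nonneg fun i _ => abs_nonneg _
    linarith
  have hε : 0 < ε := inv_pos.mpr hden
  set P : Matrix (Fin m) (Fin m) ℝ := 1 + ε • A with hPdef
  have hPapply : ∀ i j, P i j = (if i = j then (1:ℝ) else 0) + ε * A i j := by
    intro i j
    simp [hPdef, Matrix.add_apply, Matrix.one_apply, Matrix.smul_apply, smul_eq_mul]
  have hPnn : ∀ i j, 0 ≤ P i j := by
    intro i j
    rw [hPapply]
    by_cases h : i = j
    · subst h
      rw [if_pos rfl]
      have h1 : |A i i| ≤ ∑ k, |A k k| :=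
        Finset.single_le_sum (f := fun k => |A k k|) (fun k _ => abs_nonneg _) (Finset.mem_univ i)
      have h2 : ε * (1 + ∑ k, |A k k|) = 1 := inv_mul_cancel₀ (ne_of_gt hden)
      have h3 : -A i i ≤ 1 + ∑ k, |A k k| := by
        have := neg_abs_le (A i i); linarith
      have h4 : ε * (-A i i) ≤ ε * (1 + ∑ k, |A k k|) :=
        mul_le_mul_of_nonneg_left h3 hε.le
      nlinarith
    · rw [if_neg h]
      have := hMetz i j h
      positivity
  have hPcol : ∀ j, ∑ i, P i j = 1 := by
    intro j
    simp only [hPapply, Finset.sum_add_distrib, ← Finset.mul_sum, hsum j, mul_zero, add_zero]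
    simp
  have hsumMul : ∀ v : Fin m → ℝ, ∑ i, P.mulVec v i = ∑ i, v i := by
    intro v
    calc ∑ i, P.mulVec v i = ∑ j, (∑ i, P i j) * v j := by
          simp only [Matrix.mulVec, dotProduct]
          rw [Finset.sum_comm]
          simp [Finset.sum_mul]
    _ = ∑ j, v j := by simp [hPcol]
  have hstep : ∀ v : Fin m → ℝ, (∀ i, 0 ≤ v i) → (∑ i, v i = 1) →
      (∀ i, 0 ≤ P.mulVec v i) ∧ ∑ i, P.mulVec v i = 1 := by
    intro v hv hvs
    refine ⟨fun i => ?_, by rw [hsumMul, hvs]⟩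
    simp only [Matrix.mulVec, dotProduct]
    exact Finset.sum_nonneg fun j _ => mul_nonneg (hPnn i j) (hv j)
  set y : ℕ → Fin m → ℝ := fun n => (fun w => P.mulVec w)^[n] (fun _ => (m:ℝ)⁻¹) with hydef
  have hysucc : ∀ n, y (n+1) = P.mulVec (y n) := by
    intro n; simp [hydef, Function.iterate_succ_apply']
  have hy : ∀ n, (∀ i, 0 ≤ y n i) ∧ ∑ i, y n i = 1 := by
    intro n
    induction n with
    | zero =>
      refine ⟨fun i => by simp only [hydef, Function.iterate_zero, id_eq]; positivity, ?_⟩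
      simp only [hydef, Function.iterate_zero, id_eq, Finset.sum_const, Finset.card_univ,
        Fintype.card_fin, nsmul_eq_mul]
      field_simp
    | succ n ih =>
      rw [hysucc]
      exact hstep _ ih.1 ih.2
  have hy01 : ∀ n i, y n i ≤ 1 := by
    intro n i
    calc y n i ≤ ∑ j, y n j :=
          Finset.single_le_sum (fun j _ => (hy n).1 j) (Finset.mem_univ i)
    _ = 1 := (hy n).2
  set a : ℕ → Fin m → ℝ := fun n => ((n:ℝ)+1)⁻¹ • ∑ k ∈ Finset.range (n+1), y k with hadef
  set S : Set (Fin m → ℝ) := {v | (∀ i, 0 ≤ v i) ∧ ∑ i, v i = 1} with hSdef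
  have haS : ∀ n, a n ∈ S := by
    intro n
    have hpos : (0:ℝ) < (n:ℝ)+1 := by positivity
    constructor
    · intro i
      simp only [hadef, Pi.smul_apply, smul_eq_mul, Finset.sum_apply]
      exact mul_nonneg (by positivity) (Finset.sum_nonneg fun k _ => (hy k).1 i)
    · have : ∑ i, a n i = ((n:ℝ)+1)⁻¹ * ∑ k ∈ Finset.range (n+1), ∑ i, y k i := by
        simp only [hadef, Pi.smul_apply, smul_eq_mul, Finset.sum_apply, ← Finset.mul_sum]
        rw [Finset.sum_comm]
      rw [this]
      simp only [fun k => (hy k).2, Finset.sum_const, Finset.card_range, nsmul_eq_mul, mul_one]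
      field_simp
      push_cast
      ring
  -- compactness of S
  have hSclosed : IsClosed S := by
    have h1 : IsClosed {v : Fin m → ℝ | ∀ i, 0 ≤ v i} := by
      have : {v : Fin m → ℝ | ∀ i, 0 ≤ v i} = ⋂ i, {v | 0 ≤ v i} := by
        ext v; simp [Set.mem_iInter]
      rw [this]
      exact isClosed_iInter fun i => isClosed_le continuous_const (continuous_apply i)
    have h2 : IsClosed {v : Fin m → ℝ | ∑ i, v i = 1} :=
      isClosed_eq (by exact continuous_finset_sum _ fun i _ => continuous_apply i) continuous_const
    exact h1.inter h2
  have hSsub : S ⊆ Set.Icc (0 : Fin m → ℝ) 1 := by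
    intro v hv
    refine ⟨fun i => hv.1 i, fun i => ?_⟩
    calc v i ≤ ∑ j, v j := Finset.single_le_sum (fun j _ => hv.1 j) (Finset.mem_univ i)
    _ = 1 := hv.2
  have hScompact : IsCompact S := IsCompact.of_isClosed_subset isCompact_Icc hSclosed hSsub
  obtain ⟨x, hxS, φ, hφmono, hφtend⟩ := hScompact.tendsto_subseq haS
  -- key identity
  have hkey : ∀ n, P.mulVec (a n) = a n + ((n:ℝ)+1)⁻¹ • (y (n+1) - y 0) := by
    intro n
    have htel : ∑ k ∈ Finset.range (n+1), y (k+1)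
        = (∑ k ∈ Finset.range (n+1), y k) + y (n+1) - y 0 := by
      have h1 := Finset.sum_range_succ y (n+1)
      have h2 := Finset.sum_range_succ' y (n+1)
      rw [h1] at h2
      exact eq_sub_of_add_eq h2.symm
    have : P.mulVec (a n) = ((n:ℝ)+1)⁻¹ • ∑ k ∈ Finset.range (n+1), P.mulVec (y k) := by
      simp only [hadef]
      rw [← Matrix.mulVecLin_apply, _root_.map_smul, map_sum]
      simp [Matrix.mulVecLin_apply]
    rw [this]
    have : ∑ k ∈ Finset.range (n+1), P.mulVec (y k) = ∑ k ∈ Finset.range (n+1), y (k+1) := by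
      exact Finset.sum_congr rfl fun k _ => (hysucc k).symm
    rw [this, htel, hadef]
    simp only [smul_add, smul_sub]
    abel
  -- limits
  have hφatTop : Tendsto φ atTop atTop := hφmono.tendsto_atTop
  have hc0 : Tendsto (fun k => ((φ k : ℝ)+1)⁻¹) atTop (𝓝 0) := by
    have h1 : Tendsto (fun n : ℕ => ((n:ℝ)+1)⁻¹) atTop (𝓝 0) := by
      simpa [one_div] using tendsto_one_div_add_atTop_nhds_zero_nat (𝕜 := ℝ)
    exact h1.comp hφatTop
  have herr : Tendsto (fun k => ((φ k : ℝ)+1)⁻¹ • (y (φ k + 1) - y 0)) atTop (𝓝 0) := by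
    apply squeeze_zero_norm (a := fun k => ((φ k : ℝ)+1)⁻¹ * 2)
    · intro k
      rw [norm_smul]
      have h1 : ‖((φ k : ℝ)+1)⁻¹‖ = ((φ k : ℝ)+1)⁻¹ := by
        rw [Real.norm_eq_abs, abs_of_pos]; positivity
      rw [h1]
      refine mul_le_mul_of_nonneg_left ?_ (by positivity)
      rw [pi_norm_le_iff_of_nonneg (by norm_num)]
      intro i
      rw [Real.norm_eq_abs, Pi.sub_apply, abs_sub_le_iff]
      constructor
      · linarith [hy01 (φ k + 1) i, (hy 0).1 i, hy01 0 i, (hy (φ k + 1)).1 i]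
      · linarith [hy01 (φ k + 1) i, (hy 0).1 i, hy01 0 i, (hy (φ k + 1)).1 i]
    · simpa using hc0.mul_const 2
  have hPcont : Continuous (fun v : Fin m → ℝ => P.mulVec v) := by
    apply continuous_pi
    intro i
    simp only [Matrix.mulVec, dotProduct]
    exact continuous_finset_sum _ fun j _ => (continuous_const.mul (continuous_apply j))
  have hlim1 : Tendsto (fun k => P.mulVec (a (φ k))) atTop (𝓝 (P.mulVec x)) :=
    (hPcont.tendsto x).comp hφtend
  have hlim2 : Tendsto (fun k => P.mulVec (a (φ k))) atTop (𝓝 x) := by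
    have : (fun k => P.mulVec (a (φ k)))
        = fun k => a (φ k) + ((φ k : ℝ)+1)⁻¹ • (y (φ k + 1) - y 0) := by
      funext k; exact hkey (φ k)
    rw [this]
    simpa using hφtend.add herr
  have hfix : P.mulVec x = x := tendsto_nhds_unique hlim1 hlim2
  refine ⟨x, hxS.1, hxS.2, ?_⟩
  have hexp : P.mulVec x = x + ε • A.mulVec x := by
    rw [hPdef, Matrix.add_mulVec, Matrix.one_mulVec, Matrix.smul_mulVec]
  rw [hexp] at hfix
  have h0 : ε • A.mulVec x = 0 := by
    have := congrArg (fun z => z - x) hfix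
    simp only [add_sub_cancel_left, sub_self] at this
    exact this
  have := (smul_eq_zero.mp h0).resolve_left (ne_of_gt hε)
  exact this

theorem stmt1_exists_nonzero_DFE {nI nU nL : ℕ}
    (VI : Matrix (Fin nI) (Fin nI) ℝ) (VU : Matrix (Fin nU) (Fin nI ⊕ Fin nU) ℝ)
    (F0 : (Fin nL → ℝ) → Matrix (Fin nI) (Fin nI) ℝ)
    (Fp : (Fin nL → ℝ) → Matrix (Fin nI) (Fin nU) ℝ)
    (Fm : (Fin nL → ℝ) → Matrix (Fin nU) (Fin nU) ℝ)
    -- Assumption 1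
    (hF0lin : IsLinearMap ℝ F0) (hFplin : IsLinearMap ℝ Fp) (hFmlin : IsLinearMap ℝ Fm)
    (hF0M : ∀ μ : Fin nL → ℝ, (∀ l, 0 ≤ μ l) → Metzler (F0 μ))
    (hFpPos : ∀ μ : Fin nL → ℝ, (∀ l, 0 ≤ μ l) → ∀ i j, 0 ≤ Fp μ i j)
    (hFmPos : ∀ μ : Fin nL → ℝ, (∀ l, 0 ≤ μ l) → ∀ i j, 0 ≤ Fm μ i j)
    (hFmDiag : ∀ μ : Fin nL → ℝ, (∀ l, 0 ≤ μ l) → ∀ i j, i ≠ j → Fm μ i j = 0)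
    (hF0sum : ∀ μ : Fin nL → ℝ, (∀ l, 0 ≤ μ l) → ∀ j, ∑ i, F0 μ i j = 0)
    (hFpFm : ∀ μ : Fin nL → ℝ, (∀ l, 0 ≤ μ l) → ∀ j, ∑ i, Fp μ i j = ∑ i, Fm μ i j)
    -- Assumption 3
    (hVUU_M : Metzler (VU.submatrix id Sum.inr))
    (hVUU_sum : ∀ j, ∑ i, VU i (Sum.inr j) = 0)
    (hVUU_simple : Polynomial.rootMultiplicity 0 (VU.submatrix id Sum.inr).charpoly = 1)
    (hVI_M : Metzler VI)
    (hVUI_pos : ∀ i j, 0 ≤ VU i (Sum.inl j))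
    (hVUI_ne : VU.submatrix id Sum.inl ≠ 0)
    (hbal : ∀ j, ∑ i : Fin nU, VU i (Sum.inl j) ≤ -∑ i, VI i j)
    (hpos : ∀ j : Fin nI, 0 < ∑ i : Fin nU, VU i (Sum.inl j)) :
    ∃ xstar ∈ XeqSet VI VU F0 Fp Fm, xstar ≠ 0 := by
  have hnU : 0 < nU := by
    rcases Nat.eq_zero_or_pos nU with h | h
    · exfalso; apply hVUI_ne; subst h; ext i j; exact i.elim0
    · exact h
  obtain ⟨v, hv0, hv1, hvker⟩ := exists_stationary hnU (VU.submatrix id Sum.inr)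
    (fun i j hij => hVUU_M i j hij) (fun j => hVUU_sum j)
  set xstar : EpiState nI nU := Sum.elim (fun _ => (0:ℝ)) v with hxdef
  have hxI : xInf xstar = 0 := by funext i; rfl
  have hxU : xUnf xstar = v := by funext j; rfl
  refine ⟨xstar, ⟨⟨fun i => rfl, fun j => hv0 j⟩, ?_⟩, ?_⟩
  · funext z
    cases z with
    | inl i =>
      show ((F0 0 + VI).mulVec (xInf xstar) + (Fp 0).mulVec (xUnf xstar)) i = 0
      rw [hxI, hxU, hFplin.map_zero, Matrix.mulVec_zero, Matrix.zero_mulVec]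
      simp
    | inr j =>
      show (VU.mulVec xstar - (Fm 0).mulVec (xUnf xstar)) j = 0
      rw [hxU, hFmlin.map_zero, Matrix.zero_mulVec]
      have hVUx : VU.mulVec xstar j = (VU.submatrix id Sum.inr).mulVec v j := by
        simp only [Matrix.mulVec, dotProduct, Fintype.sum_sum_type]
        simp [hxdef, Matrix.submatrix_apply]
      simp only [Pi.sub_apply, Pi.zero_apply, sub_zero, hVUx, hvker]
  · have hj : ∃ j, v j ≠ 0 := by
      by_contra h
      push_neg at h
      rw [Finset.sum_congr rfl (fun j _ => h j)] at hv1
      simp at hv1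
    obtain ⟨j, hj⟩ := hj
    intro hzero
    apply hj
    have := congrFun hzero (Sum.inr j)
    simpa [hxdef] using this


end
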